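/- With T = L + M, R = K + M as above, where L is the fraction field of K and both K and T have finite Krull dimension, R has finite Krull dimension equal to max{ht_T(M) + dim K, dim T}. -/

import Mathlib

section Setup

variable {T : Type*} [CommRing T] [IsDomain T]

/-- The subring `K + M` of `T`, for a subring `K` and an ideal `M` of `T`. -/
def ringR (K : Subring T) (M : Ideal T) : Subring T where
  carrier := {t | ∃ k ∈ K, ∃ m ∈ M, t = k + m}
  one_mem' := ⟨1, K.one_mem, 0, M.zero_mem, by ring⟩
  zero_mem' := ⟨0, K.zero_mem, 0, M.zero_mem, by ring⟩
  add_mem' := by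
    rintro a b ⟨k1, hk1, m1, hm1, rfl⟩ ⟨k2, hk2, m2, hm2, rfl⟩
    exact ⟨k1 + k2, K.add_mem hk1 hk2, m1 + m2, M.add_mem hm1 hm2, by ring⟩
  neg_mem' := by
    rintro a ⟨k, hk, m, hm, rfl⟩
    exact ⟨-k, K.neg_mem hk, -m, M.neg_mem hm, by ring⟩
  mul_mem' := by
    rintro a b ⟨k1, hk1, m1, hm1, rfl⟩ ⟨k2, hk2, m2, hm2, rfl⟩
    refine ⟨k1 * k2, K.mul_mem hk1 hk2, k1 * m2 + m1 * k2 + m1 * m2, ?_, by ring⟩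
    exact M.add_mem (M.add_mem (M.mul_mem_left _ hm2) (M.mul_mem_right _ hm1))
      (M.mul_mem_left _ hm2)

theorem K_le_ringR (K : Subring T) (M : Ideal T) : K ≤ ringR K M :=
  fun k hk => ⟨k, hk, 0, M.zero_mem, (add_zero k).symm⟩

/-- An ideal `A` of `T`, viewed as a module over a subring `S` of `T`. -/
def idealAsMod (S : Subring T) (A : Ideal T) : Submodule ↥S T where
  carrier := A
  add_mem' := fun ha hb => A.add_mem ha hb
  zero_mem' := A.zero_mem
  smul_mem' := fun r a ha => A.mul_mem_left (r : T) ha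

/-- The subring `L` of `T` is a field. -/
def IsFieldSub (L : Subring T) : Prop := ∀ x ∈ L, x ≠ 0 → ∃ y ∈ L, x * y = 1

/-- `T = L ⊕ M` as additive groups: `L` is a retract of `T` with maximal ideal `M`. -/
def DirectSumDecomp (L : Subring T) (M : Ideal T) : Prop :=
  (∀ t : T, ∃ l ∈ L, ∃ m ∈ M, t = l + m) ∧ ∀ x ∈ L, x ∈ M → x = 0

/-- `L` is the field of fractions of `K` (inside `T`). -/
def IsFracOf (K L : Subring T) : Prop :=
  ∀ l ∈ L, ∃ a ∈ K, ∃ b ∈ K, b ≠ 0 ∧ l * b = a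

/-- The module structure on a subring over a smaller subring. -/
noncomputable def modOfLE {K L : Subring T} (h : K ≤ L) : Module ↥K ↥L :=
  ((Subring.inclusion h).toAlgebra).toModule

/-- `T` localized at the prime `M` is a valuation domain. -/
def ValAtPrime (M : Ideal T) (hp : M.IsPrime) : Prop :=
  @ValuationRing (@Localization.AtPrime T _ M hp) _
    (@IsLocalization.isDomain_of_local_atPrime T _ _ M hp)

/-- A Prüfer domain: every nonzero finitely generated ideal is invertible. -/
def IsPruferDomain (A : Type*) [CommRing A] [IsDomain A] : Prop :=
  ∀ I : Ideal A, I ≠ ⊥ → I.FG →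
    IsUnit (I : FractionalIdeal (nonZeroDivisors A) (FractionRing A))

/-- A GCD domain: any two nonzero elements admit a greatest common divisor. -/
def IsGCDDomain (A : Type*) [CommRing A] [IsDomain A] : Prop :=
  ∀ a b : A, a ≠ 0 → b ≠ 0 →
    ∃ g : A, g ∣ a ∧ g ∣ b ∧ ∀ c : A, c ∣ a → c ∣ b → c ∣ g

/-- The algebra structure of the fraction field of `T` over a subring of `T`. -/
noncomputable def algFrac (S : Subring T) : Algebra ↥S (FractionRing T) :=
  ((algebraMap T (FractionRing T)).comp S.subtype).toAlgebra

end Setup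

section Aux
set_option linter.unusedSectionVars false

variable {T : Type*} [CommRing T] [IsDomain T]
variable {L : Subring T} {M : Ideal T} {K : Subring T}

lemma mem_ringR_of_mem_M {m : T} (hm : m ∈ M) : m ∈ ringR K M :=
  ⟨0, K.zero_mem, m, hm, (zero_add m).symm⟩

lemma sepKM (hLM : DirectSumDecomp L M) (hKL : K ≤ L) {x : T}
    (hx : x ∈ K) (hx' : x ∈ M) : x = 0 :=
  hLM.2 x (hKL hx) hx'

/-- `M` as an ideal of `R = ringR K M`. -/
def MR (K : Subring T) (M : Ideal T) : Ideal ↥(ringR K M) :=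
  M.comap (ringR K M).subtype

lemma mem_MR {x : ↥(ringR K M)} : x ∈ MR K M ↔ (x : T) ∈ M := Iff.rfl

lemma MR_prime (hM : M.IsPrime) : (MR K M).IsPrime := hM.comap _

/-- projection value: the `K`-component of an element of `R`. -/
noncomputable def pk (K : Subring T) (M : Ideal T) (x : ↥(ringR K M)) : T :=
  x.2.choose

lemma pk_mem_K (x : ↥(ringR K M)) : pk K M x ∈ K := x.2.choose_spec.1

lemma pk_spec (x : ↥(ringR K M)) : (x : T) - pk K M x ∈ M := by
  obtain ⟨hk, m, hm, hx⟩ := x.2.choose_spec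
  rw [show ((x : T) - pk K M x) = m by rw [hx, pk]; ring]
  exact hm

lemma pk_uniq (hLM : DirectSumDecomp L M) (hKL : K ≤ L) (x : ↥(ringR K M))
    {k : T} (hk : k ∈ K) (hm : (x : T) - k ∈ M) : pk K M x = k := by
  have h1 : pk K M x - k ∈ K := K.sub_mem (pk_mem_K x) hk
  have h2 : pk K M x - k ∈ M := by
    have := M.sub_mem hm (pk_spec x)
    simpa using this
  exact sub_eq_zero.mp (sepKM hLM hKL h1 h2)

lemma pk_uniq' (hLM : DirectSumDecomp L M) (hKL : K ≤ L) (x : ↥(ringR K M))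
    {k : T} (hk : k ∈ K) (hm : (x : T) - k ∈ M) : pk K M x = k :=
  pk_uniq hLM hKL x hk hm

/-- the projection `R →+* K`. -/
noncomputable def projK (hLM : DirectSumDecomp L M) (hKL : K ≤ L) :
    ↥(ringR K M) →+* ↥K where
  toFun x := ⟨pk K M x, pk_mem_K x⟩
  map_one' := by
    ext
    exact pk_uniq hLM hKL 1 K.one_mem (by simpa using M.zero_mem)
  map_mul' x y := by
    ext
    refine pk_uniq hLM hKL (x * y) (K.mul_mem (pk_mem_K x) (pk_mem_K y)) ?_
    have h1 : ((x : T)) * ((y : T) - pk K M y) ∈ M := M.mul_mem_left _ (pk_spec y)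
    have h2 : ((x : T) - pk K M x) * pk K M y ∈ M := M.mul_mem_right _ (pk_spec x)
    have := M.add_mem h1 h2
    convert this using 1
    push_cast
    ring
  map_zero' := by
    ext
    exact pk_uniq hLM hKL 0 K.zero_mem (by simpa using M.zero_mem)
  map_add' x y := by
    ext
    refine pk_uniq hLM hKL (x + y) (K.add_mem (pk_mem_K x) (pk_mem_K y)) ?_
    have := M.add_mem (pk_spec x) (pk_spec y)
    convert this using 1
    push_cast
    ring

lemma projK_surjective (hLM : DirectSumDecomp L M) (hKL : K ≤ L) :
    Function.Surjective (projK hLM hKL) := by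
  intro k
  refine ⟨⟨(k : T), K_le_ringR K M k.2⟩, ?_⟩
  ext
  exact pk_uniq hLM hKL _ k.2 (by simpa using M.zero_mem)

lemma projK_eq_zero_iff (hLM : DirectSumDecomp L M) (hKL : K ≤ L)
    (x : ↥(ringR K M)) : projK hLM hKL x = 0 ↔ (x : T) ∈ M := by
  constructor
  · intro h
    have h0 : pk K M x = 0 := congrArg Subtype.val h
    have h1 := pk_spec x
    rwa [h0, sub_zero] at h1
  · intro h
    ext
    exact pk_uniq hLM hKL x K.zero_mem (by simpa using h)

lemma ker_projK (hLM : DirectSumDecomp L M) (hKL : K ≤ L) :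
    RingHom.ker (projK hLM hKL) = MR K M := by
  ext x
  rw [RingHom.mem_ker, projK_eq_zero_iff hLM hKL, mem_MR]

/-- contraction of primes of `T` to `R`. -/
def specContr (K : Subring T) (M : Ideal T) :
    PrimeSpectrum T → PrimeSpectrum ↥(ringR K M) :=
  fun Q => ⟨Q.asIdeal.comap (ringR K M).subtype, Q.2.comap _⟩

lemma specContr_strictMono (hM : M.IsMaximal) :
    StrictMono (specContr K M) := by
  intro Q₁ Q₂ hlt
  have hlt' : Q₁.asIdeal < Q₂.asIdeal := (PrimeSpectrum.asIdeal_lt_asIdeal _ _).mpr hlt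
  have hmono : (specContr K M Q₁) ≤ specContr K M Q₂ := by
    rw [← PrimeSpectrum.asIdeal_le_asIdeal]
    exact Ideal.comap_mono hlt'.le
  refine lt_of_le_of_ne hmono ?_
  intro heq
  have hMQ₁ : ¬ M ≤ Q₁.asIdeal := by
    intro hle
    have h1 : M = Q₁.asIdeal := hM.eq_of_le Q₁.2.ne_top hle
    have h4 : M = Q₂.asIdeal := hM.eq_of_le Q₂.2.ne_top (h1 ▸ hlt'.le)
    exact absurd (h1 ▸ h4 ▸ hlt') (lt_irrefl _)
  obtain ⟨m₀, hm₀M, hm₀Q₁⟩ := SetLike.not_le_iff_exists.mp hMQ₁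
  obtain ⟨t, htQ₂, htQ₁⟩ := SetLike.exists_of_lt hlt'
  have hx : t * m₀ ∈ ringR K M := mem_ringR_of_mem_M (M.mul_mem_left t hm₀M)
  have h5 : (⟨t * m₀, hx⟩ : ↥(ringR K M)) ∈ (specContr K M Q₂).asIdeal :=
    Q₂.asIdeal.mul_mem_right m₀ htQ₂
  rw [← heq] at h5
  rcases Q₁.2.mem_or_mem h5 with h | h
  · exact htQ₁ h
  · exact hm₀Q₁ h

/-- Key lemma: a prime of `R` below a prime containing `M`, not itself containing `M`,
is contained in `M`. -/
lemma le_MR_of_le (hL : IsFieldSub L) (hLM : DirectSumDecomp L M) (hKL : K ≤ L)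
    {P C : Ideal ↥(ringR K M)} (hP : P.IsPrime) (hC : C ≠ ⊤)
    (hPC : P ≤ C) (hMC : MR K M ≤ C) (hMP : ¬ MR K M ≤ P) : P ≤ MR K M := by
  intro x hxP
  rw [mem_MR]
  by_contra hxM
  -- k := pk x ≠ 0
  have hk0 : pk K M x ≠ 0 := by
    intro h0
    have := pk_spec x
    rw [h0, sub_zero] at this
    exact hxM this
  obtain ⟨k', hk'L, hkk'⟩ := hL _ (hKL (pk_mem_K x)) hk0
  obtain ⟨m₀, hm₀M, hm₀P⟩ := SetLike.not_le_iff_exists.mp hMP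
  have hm₀M' : ((m₀ : ↥(ringR K M)) : T) ∈ M := hm₀M
  -- u := k' * x = 1 + k' * (x - pk x) ∈ R
  have hmem1 : k' * ((x : T) - pk K M x) ∈ M := M.mul_mem_left _ (pk_spec x)
  have huR : k' * (x : T) ∈ ringR K M := by
    refine ⟨1, K.one_mem, k' * ((x : T) - pk K M x), hmem1, ?_⟩
    have : k' * (x : T) = k' * pk K M x + k' * ((x : T) - pk K M x) := by ring
    rw [this, mul_comm k' (pk K M x), hkk']
  set u : ↥(ringR K M) := ⟨k' * (x : T), huR⟩ with hu
  -- m₀ * u = x * (k' * m₀) ∈ P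
  have hk'm₀R : k' * (m₀ : T) ∈ ringR K M := mem_ringR_of_mem_M (M.mul_mem_left _ hm₀M')
  have hprod : m₀ * u = x * ⟨k' * (m₀ : T), hk'm₀R⟩ := by
    ext
    push_cast
    ring
  have huP : u ∈ P := by
    have h6 : m₀ * u ∈ P := hprod ▸ P.mul_mem_right _ hxP
    rcases hP.mem_or_mem h6 with h | h
    · exact absurd h hm₀P
    · exact h
  -- u - 1 ∈ M so 1 ∈ C
  have hu1 : ((u : T) - 1) ∈ M := by
    have : (u : T) - 1 = k' * ((x : T) - pk K M x) := by
      rw [hu]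
      simp only
      have : k' * (x : T) = k' * pk K M x + k' * ((x : T) - pk K M x) := by ring
      rw [this, mul_comm k' (pk K M x), hkk']
      ring
    rw [this]
    exact hmem1
  have h7 : (u - 1 : ↥(ringR K M)) ∈ MR K M := by
    rw [mem_MR]
    push_cast
    exact hu1
  have h8 : (1 : ↥(ringR K M)) ∈ C := by
    have := C.sub_mem (hPC huP) (hMC h7)
    simpa using this
  exact hC (C.eq_top_iff_one.mpr h8)

/-- The subset of `T` underlying an ideal of `R`. -/
def valSet (P : Ideal ↥(ringR K M)) : Set T :=
  {a : T | ∃ h : a ∈ ringR K M, (⟨a, h⟩ : ↥(ringR K M)) ∈ P}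

lemma valSet_mono {P P' : Ideal ↥(ringR K M)} (h : P ≤ P') : valSet P ⊆ valSet P' :=
  fun _ ⟨hR, hP⟩ => ⟨hR, h hP⟩

lemma valSet_injective {P P' : Ideal ↥(ringR K M)} (h : valSet P = valSet P') : P = P' := by
  ext ⟨x, hx⟩
  constructor
  · intro hP
    obtain ⟨h1, h2⟩ := (h ▸ (⟨hx, hP⟩ : x ∈ valSet P) : x ∈ valSet P')
    exact h2
  · intro hP
    obtain ⟨h1, h2⟩ := (h ▸ (⟨hx, hP⟩ : x ∈ valSet P') : x ∈ valSet P)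
    exact h2

lemma mem_valSet_of_R {P : Ideal ↥(ringR K M)} {x : ↥(ringR K M)} (hx : x ∈ P) :
    (x : T) ∈ valSet P := ⟨x.2, by simpa using hx⟩

/-- (F): a prime of `R` contained in `M` is (as a subset) a prime ideal of `T`
contained in `M`. -/
lemma exists_primeT (hL : IsFieldSub L) (hM : M.IsPrime) (hLM : DirectSumDecomp L M)
    (hKL : K ≤ L) (hfrac : IsFracOf K L)
    {P : Ideal ↥(ringR K M)} (hP : P.IsPrime) (hPM : P ≤ MR K M) :
    ∃ Q : Ideal T, Q.IsPrime ∧ Q ≤ M ∧ (Q : Set T) = valSet P := by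
  classical
  have hval_subM : ∀ a ∈ valSet P, a ∈ M := by
    rintro a ⟨hR, hmem⟩
    exact (mem_MR).mp (hPM hmem)
  have hadd : ∀ a b : T, a ∈ valSet P → b ∈ valSet P → a + b ∈ valSet P := by
    rintro a b ⟨haR, haP⟩ ⟨hbR, hbP⟩
    refine ⟨(ringR K M).add_mem haR hbR, ?_⟩
    have h9 : (⟨a + b, (ringR K M).add_mem haR hbR⟩ : ↥(ringR K M)) = ⟨a, haR⟩ + ⟨b, hbR⟩ := by
      ext; push_cast; ring
    rw [h9]
    exact P.add_mem haP hbP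
  have hsmul : ∀ (t : T) (a : T), a ∈ valSet P → t * a ∈ valSet P := by
    intro t a ha
    have haM : a ∈ M := hval_subM a ha
    have htaM : t * a ∈ M := M.mul_mem_left t haM
    obtain ⟨haR, haP⟩ := ha
    by_cases hMP : MR K M ≤ P
    · exact ⟨mem_ringR_of_mem_M htaM, hMP ((mem_MR).mpr htaM)⟩
    · obtain ⟨m₀, hm₀M, hm₀P⟩ := SetLike.not_le_iff_exists.mp hMP
      have hm₀M' : ((m₀ : ↥(ringR K M)) : T) ∈ M := hm₀M
      have htm₀R : t * (m₀ : T) ∈ ringR K M := mem_ringR_of_mem_M (M.mul_mem_left t hm₀M')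
      refine ⟨mem_ringR_of_mem_M htaM, ?_⟩
      have hprod : (⟨t * a, mem_ringR_of_mem_M htaM⟩ : ↥(ringR K M)) * m₀
          = ⟨a, haR⟩ * ⟨t * (m₀ : T), htm₀R⟩ := by
        ext; push_cast; ring
      have h6 : (⟨t * a, mem_ringR_of_mem_M htaM⟩ : ↥(ringR K M)) * m₀ ∈ P :=
        hprod ▸ P.mul_mem_right _ haP
      rcases hP.mem_or_mem h6 with h | h
      · exact h
      · exact absurd h hm₀P
  obtain ⟨Q, hQ⟩ : ∃ Q : Ideal T, (Q : Set T) = valSet P :=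
    ⟨{ carrier := valSet P
       zero_mem' := ⟨(ringR K M).zero_mem, by exact P.zero_mem⟩
       add_mem' := fun {a b} ha hb => hadd a b ha hb
       smul_mem' := fun t a ha => hsmul t a ha }, rfl⟩
  have hmemQ : ∀ a : T, a ∈ Q ↔ a ∈ valSet P := by
    intro a
    rw [← SetLike.mem_coe, hQ]
  have hQM : Q ≤ M := fun a ha => hval_subM a ((hmemQ a).mp ha)
  refine ⟨Q, ?_, hQM, hQ⟩
  by_cases hMP : MR K M ≤ P
  · -- then P = MR and Q = M
    have hPeq : P = MR K M := le_antisymm hPM hMP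
    have hQeqM : Q = M := by
      refine le_antisymm hQM ?_
      intro m hm
      rw [hmemQ]
      exact ⟨mem_ringR_of_mem_M hm, by rw [hPeq]; exact (mem_MR).mpr hm⟩
    rw [hQeqM]
    exact hM
  · obtain ⟨m₀, hm₀M, hm₀P⟩ := SetLike.not_le_iff_exists.mp hMP
    have hm₀M' : ((m₀ : ↥(ringR K M)) : T) ∈ M := hm₀M
    constructor
    · -- Q ≠ ⊤
      intro htop
      have : (1 : T) ∈ M := hQM (htop ▸ Submodule.mem_top)
      exact hM.ne_top (M.eq_top_iff_one.mpr this)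
    · intro a b hab
      rw [hmemQ] at hab ⊢
      rw [hmemQ b]
      obtain ⟨habR, habP⟩ := hab
      -- the product of R-elements (a*m)(b*m') is always in P
      have hkey : ∀ m ∈ M, ∀ m' ∈ M, ∀ (h1 : a * m ∈ ringR K M) (h2 : b * m' ∈ ringR K M),
          (⟨a * m, h1⟩ : ↥(ringR K M)) * ⟨b * m', h2⟩ ∈ P := by
        intro m hm m' hm' h1 h2
        have hmm' : m * m' ∈ M := M.mul_mem_left m hm'
        have hprod : (⟨a * m, h1⟩ : ↥(ringR K M)) * ⟨b * m', h2⟩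
            = (⟨a * b, habR⟩ : ↥(ringR K M)) * ⟨m * m', mem_ringR_of_mem_M hmm'⟩ := by
          ext; push_cast; ring
        rw [hprod]
        exact P.mul_mem_right _ habP
      -- one of a, b multiplies all of M into P
      have hsplit : (∀ m ∈ M, ∀ (h1 : a * m ∈ ringR K M), (⟨a * m, h1⟩ : ↥(ringR K M)) ∈ P)
          ∨ (∀ m ∈ M, ∀ (h1 : b * m ∈ ringR K M), (⟨b * m, h1⟩ : ↥(ringR K M)) ∈ P) := by
        by_cases hcase : ∀ m ∈ M, ∀ (h1 : a * m ∈ ringR K M), (⟨a * m, h1⟩ : ↥(ringR K M)) ∈ P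
        · exact Or.inl hcase
        · push_neg at hcase
          obtain ⟨m, hm, h1, hnot⟩ := hcase
          refine Or.inr fun m' hm' h2 => ?_
          rcases hP.mem_or_mem (hkey m hm m' hm' h1 h2) with h | h
          · exact absurd h hnot
          · exact h
      -- conclude membership from `cM ⊆ P`
      have hconc : ∀ c : T, (∀ m ∈ M, ∀ (h1 : c * m ∈ ringR K M),
          (⟨c * m, h1⟩ : ↥(ringR K M)) ∈ P) → c ∈ valSet P := by
        intro c hc
        obtain ⟨l, hlL, m₁, hm₁M, hcdec⟩ := hLM.1 c
        obtain ⟨a₀, ha₀K, b₀, hb₀K, hb₀ne, hlb₀⟩ := hfrac l hlL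
        obtain ⟨b₀', hb₀'L, hb₀b₀'⟩ := hL b₀ (hKL hb₀K) hb₀ne
        have hcb₀R : c * b₀ ∈ ringR K M := by
          refine ⟨a₀, ha₀K, m₁ * b₀, M.mul_mem_right b₀ hm₁M, ?_⟩
          rw [hcdec]; rw [← hlb₀]; ring
        have hcm₀ : (⟨c * (m₀ : T), mem_ringR_of_mem_M (M.mul_mem_left c hm₀M')⟩ :
            ↥(ringR K M)) ∈ P := hc (m₀ : T) hm₀M' _
        -- (c*b₀) * m₀ ∈ P
        have hb₀R : (b₀ : T) ∈ ringR K M := K_le_ringR K M hb₀K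
        have hprod2 : (⟨c * b₀, hcb₀R⟩ : ↥(ringR K M)) * m₀
            = (⟨c * (m₀ : T), mem_ringR_of_mem_M (M.mul_mem_left c hm₀M')⟩ :
                ↥(ringR K M)) * ⟨b₀, hb₀R⟩ := by
          ext; push_cast; ring
        have h6 : (⟨c * b₀, hcb₀R⟩ : ↥(ringR K M)) * m₀ ∈ P := by
          rw [hprod2]; exact P.mul_mem_right _ hcm₀
        have hcb₀P : (⟨c * b₀, hcb₀R⟩ : ↥(ringR K M)) ∈ P := by
          rcases hP.mem_or_mem h6 with h | h
          · exact h
          · exact absurd h hm₀P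
        -- c = b₀' * (c * b₀) ∈ valSet P by hsmul
        have : b₀' * (c * b₀) ∈ valSet P := hsmul b₀' _ (mem_valSet_of_R hcb₀P)
        have hceq : c = b₀' * (c * b₀) := by
          have : b₀ * b₀' = 1 := hb₀b₀'
          calc c = c * (b₀ * b₀') := by rw [this, mul_one]
          _ = b₀' * (c * b₀) := by ring
        rw [hceq]
        exact this
      rcases hsplit with h | h
      · exact Or.inl (hconc a h)
      · exact Or.inr (hconc b h)

/-- `(P :_T M)`: the set of `t : T` with `tM ⊆ P`, an ideal of `T`. -/
def QT (K : Subring T) (M : Ideal T) (P : Ideal ↥(ringR K M)) : Ideal T where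
  carrier := {t : T | ∀ m ∈ M, ∀ (h : t * m ∈ ringR K M), (⟨t * m, h⟩ : ↥(ringR K M)) ∈ P}
  zero_mem' := by
    intro m hm h
    have : (⟨0 * m, h⟩ : ↥(ringR K M)) = 0 := Subtype.ext (by simpa using (zero_mul m))
    rw [this]
    exact P.zero_mem
  add_mem' := by
    intro a b ha hb m hm h
    have h1 : a * m ∈ ringR K M := mem_ringR_of_mem_M (M.mul_mem_left a hm)
    have h2 : b * m ∈ ringR K M := mem_ringR_of_mem_M (M.mul_mem_left b hm)
    have : (⟨(a + b) * m, h⟩ : ↥(ringR K M)) = ⟨a * m, h1⟩ + ⟨b * m, h2⟩ := by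
      ext; push_cast; ring
    rw [this]
    exact P.add_mem (ha m hm h1) (hb m hm h2)
  smul_mem' := by
    intro c t ht m hm h
    have hcm : c * m ∈ M := M.mul_mem_left c hm
    have h1 : t * (c * m) ∈ ringR K M := mem_ringR_of_mem_M (M.mul_mem_left t hcm)
    have : (⟨(c • t) * m, h⟩ : ↥(ringR K M)) = ⟨t * (c * m), h1⟩ := by
      ext; push_cast; rw [smul_eq_mul]; ring
    rw [this]
    exact ht (c * m) hcm h1

lemma mem_QT {P : Ideal ↥(ringR K M)} {t : T} :
    t ∈ QT K M P ↔ ∀ m ∈ M, ∀ (h : t * m ∈ ringR K M), (⟨t * m, h⟩ : ↥(ringR K M)) ∈ P :=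
  Iff.rfl

lemma QT_mono {P P' : Ideal ↥(ringR K M)} (h : P ≤ P') : QT K M P ≤ QT K M P' :=
  fun t ht m hm h1 => h (ht m hm h1)

lemma comap_QT {P : Ideal ↥(ringR K M)} (hP : P.IsPrime) (hMP : ¬ MR K M ≤ P) :
    (QT K M P).comap (ringR K M).subtype = P := by
  obtain ⟨m₀, hm₀M, hm₀P⟩ := SetLike.not_le_iff_exists.mp hMP
  have hm₀M' : ((m₀ : ↥(ringR K M)) : T) ∈ M := hm₀M
  ext x
  simp only [Ideal.mem_comap, Subring.coe_subtype]
  rw [mem_QT]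
  constructor
  · intro h
    have h1 : (x : T) * (m₀ : T) ∈ ringR K M :=
      mem_ringR_of_mem_M (M.mul_mem_left _ hm₀M')
    have h2 : (⟨(x : T) * (m₀ : T), h1⟩ : ↥(ringR K M)) = x * m₀ := by ext; push_cast; ring
    have h3 := h _ hm₀M' h1
    rw [h2] at h3
    rcases hP.mem_or_mem h3 with h4 | h4
    · exact h4
    · exact absurd h4 hm₀P
  · intro hx m hm h1
    have : (⟨(x : T) * m, h1⟩ : ↥(ringR K M))
        = x * ⟨m, mem_ringR_of_mem_M hm⟩ := by ext; push_cast; ring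
    rw [this]
    exact P.mul_mem_right _ hx

lemma QT_prime {P : Ideal ↥(ringR K M)} (hM : M.IsPrime) (hP : P.IsPrime)
    (hMP : ¬ MR K M ≤ P) : (QT K M P).IsPrime := by
  constructor
  · intro htop
    apply hMP
    intro x hx
    have h1 : (1 : T) ∈ QT K M P := htop ▸ Submodule.mem_top
    have h2 := h1 (x : T) ((mem_MR).mp hx) (by simpa using x.2)
    have h3 : (⟨1 * (x : T), by simpa using x.2⟩ : ↥(ringR K M)) = x := by
      ext; simp
    rwa [h3] at h2
  · intro a b hab
    rw [mem_QT] at hab ⊢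
    rw [mem_QT (t := b)]
    by_cases hcase : ∀ m ∈ M, ∀ (h1 : a * m ∈ ringR K M), (⟨a * m, h1⟩ : ↥(ringR K M)) ∈ P
    · exact Or.inl hcase
    · push_neg at hcase
      obtain ⟨m, hm, h1, hnot⟩ := hcase
      refine Or.inr fun m' hm' h2 => ?_
      have hmm' : m * m' ∈ M := M.mul_mem_left m hm'
      have habR : a * b * (m * m') ∈ ringR K M :=
        mem_ringR_of_mem_M (M.mul_mem_left _ hmm')
      have hprod : (⟨a * m, h1⟩ : ↥(ringR K M)) * ⟨b * m', h2⟩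
          = ⟨a * b * (m * m'), habR⟩ := by ext; push_cast; ring
      have h6 : (⟨a * m, h1⟩ : ↥(ringR K M)) * ⟨b * m', h2⟩ ∈ P := by
        rw [hprod]
        exact hab (m * m') hmm' habR
      rcases hP.mem_or_mem h6 with h | h
      · exact absurd h hnot
      · exact h

lemma mapProj_comap_map (hLM : DirectSumDecomp L M) (hKL : K ≤ L)
    {P : Ideal ↥(ringR K M)} (hMP : MR K M ≤ P) :
    (P.map (projK hLM hKL)).comap (projK hLM hKL) = P := by
  rw [Ideal.comap_map_of_surjective _ (projK_surjective hLM hKL)]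
  refine sup_eq_left.mpr ?_
  intro x hx
  rw [Ideal.mem_comap, Ideal.mem_bot] at hx
  exact hMP ((mem_MR).mpr ((projK_eq_zero_iff hLM hKL x).mp hx))

lemma mapProj_prime (hLM : DirectSumDecomp L M) (hKL : K ≤ L)
    {P : Ideal ↥(ringR K M)} (hP : P.IsPrime) (hMP : MR K M ≤ P) :
    (P.map (projK hLM hKL)).IsPrime := by
  haveI := hP
  refine Ideal.map_isPrime_of_surjective (projK_surjective hLM hKL) ?_
  rw [ker_projK hLM hKL]
  exact hMP

/-- `PrimeSpectrum` is order-isomorphic to the subtype of prime ideals. -/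
def specOrderIso (A : Type*) [CommRing A] :
    PrimeSpectrum A ≃o {p : Ideal A // p.IsPrime} where
  toFun p := ⟨p.asIdeal, p.2⟩
  invFun p := ⟨p.1, p.2⟩
  left_inv _ := rfl
  right_inv _ := rfl
  map_rel_iff' {a b} := by
    constructor
    · intro h
      exact (PrimeSpectrum.asIdeal_le_asIdeal a b).mp h
    · intro h
      exact (PrimeSpectrum.asIdeal_le_asIdeal a b).mpr h

lemma exists_nat_of_wbot (x : WithBot ℕ∞) (hbot : x ≠ ⊥) (htop : x ≠ ⊤) :
    ∃ n : ℕ, x = (n : ℕ∞) := by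
  induction x with
  | bot => exact absurd rfl hbot
  | coe y =>
    induction y with
    | top => exact absurd (by rfl) htop
    | coe n => exact ⟨n, rfl⟩

lemma natCast_le_natCast_wbot {m n : ℕ} (h : m ≤ n) :
    ((m : ℕ∞) : WithBot ℕ∞) ≤ ((n : ℕ∞) : WithBot ℕ∞) := by
  rw [WithBot.coe_le_coe]
  exact_mod_cast h

lemma le_krullDim_exists_ltSeries {α : Type*} [Preorder α] {n : ℕ}
    (h : ((n : ℕ∞) : WithBot ℕ∞) ≤ Order.krullDim α) :
    ∃ p : LTSeries α, p.length = n := by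
  have hne : Nonempty α := by
    by_contra hc
    rw [not_nonempty_iff] at hc
    have := Order.krullDim_eq_bot_iff.mpr hc
    rw [this] at h
    simp at h
  by_contra hc
  push_neg at hc
  have hlt : ∀ p : LTSeries α, p.length < n := by
    intro p
    by_contra hge
    push_neg at hge
    exact hc (p.take ⟨n, by omega⟩) (by simp [RelSeries.take])
  have hn0 : n ≠ 0 := by
    intro h0
    obtain ⟨a⟩ := hne
    exact absurd (h0 ▸ hlt (RelSeries.singleton _ a)) (by simp)
  have : Order.krullDim α ≤ (((n - 1 : ℕ) : ℕ∞) : WithBot ℕ∞) := by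
    rw [Order.krullDim]
    refine iSup_le fun p => ?_
    exact_mod_cast natCast_le_natCast_wbot (by have := hlt p; omega)
  have := le_trans h this
  rw [WithBot.coe_le_coe] at this
  have := (Nat.cast_le (α := ℕ∞)).mp this
  omega

end Aux

theorem stmt_17 {T : Type*} [CommRing T] [IsDomain T]
    (L : Subring T) (M : Ideal T) (K : Subring T)
    (hL : IsFieldSub L) (hM : M.IsMaximal) (hM0 : M ≠ ⊥)
    (hLM : DirectSumDecomp L M) (hKL : K ≤ L) (hKne : K ≠ L)
    (hfrac : IsFracOf K L)
    (hKfin : ringKrullDim ↥K ≠ ⊤) (hTfin : ringKrullDim T ≠ ⊤) :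
    ringKrullDim ↥(ringR K M) ≠ ⊤ ∧
      ringKrullDim ↥(ringR K M) =
        max (ringKrullDim (@Localization.AtPrime T _ M hM.isPrime) + ringKrullDim ↥K)
          (ringKrullDim T) := by
  classical
  haveI hMp : M.IsPrime := hM.isPrime
  haveI : Nontrivial ↥K := ⟨⟨0, 1, fun h => zero_ne_one (congrArg Subtype.val h)⟩⟩
  -- notation
  set h' := ringKrullDim (@Localization.AtPrime T _ M hM.isPrime) with hh'def
  set k' := ringKrullDim ↥K with hk'def
  set t' := ringKrullDim T with ht'def
  -- the subtype of primes of T contained in M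
  have hEdim : h' = Order.krullDim {p : Ideal T // p.IsPrime ∧ p ≤ M} := by
    rw [hh'def]
    have h1 := Order.krullDim_eq_of_orderIso
      (specOrderIso (@Localization.AtPrime T _ M hM.isPrime))
    have h2 := Order.krullDim_eq_of_orderIso
      (IsLocalization.AtPrime.orderIsoOfPrime (S := Localization.AtPrime M) M)
    exact h1.trans h2
  haveI : Nonempty {p : Ideal T // p.IsPrime ∧ p ≤ M} := ⟨⟨M, hMp, le_rfl⟩⟩
  -- E includes into Spec T strictly monotonically
  have hEincl : StrictMono (fun e : {p : Ideal T // p.IsPrime ∧ p ≤ M} =>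
      (⟨e.1, e.2.1⟩ : PrimeSpectrum T)) := by
    intro a b hab
    rw [← PrimeSpectrum.asIdeal_lt_asIdeal]
    exact hab
  have hEleT : Order.krullDim {p : Ideal T // p.IsPrime ∧ p ≤ M} ≤ t' :=
    Order.krullDim_le_of_strictMono _ hEincl
  -- finiteness data
  have hh'top : h' ≠ ⊤ := by
    intro htop
    refine hTfin (top_le_iff.mp ?_)
    calc (⊤ : WithBot ℕ∞) = h' := htop.symm
    _ = _ := hEdim
    _ ≤ t' := hEleT
  have hh'bot : h' ≠ ⊥ := by
    intro hbot
    have := Order.krullDim_nonneg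
      (α := {p : Ideal T // p.IsPrime ∧ p ≤ M})
    rw [← hEdim, hbot] at this
    simp at this
  have hk'bot : k' ≠ ⊥ := by
    intro hbot
    have := Order.krullDim_nonneg (α := PrimeSpectrum ↥K)
    rw [show Order.krullDim (PrimeSpectrum ↥K) = ringKrullDim ↥K from rfl,
      ← hk'def, hbot] at this
    simp at this
  obtain ⟨h, hh⟩ := exists_nat_of_wbot h' hh'bot hh'top
  obtain ⟨k, hk⟩ := exists_nat_of_wbot k' hk'bot hKfin
  -- the strictly monotone map from Spec K into Spec R
  have hg : StrictMono (fun q : PrimeSpectrum ↥K =>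
      (⟨q.asIdeal.comap (projK hLM hKL), q.2.comap _⟩ : PrimeSpectrum ↥(ringR K M))) := by
    intro a b hab
    rw [← PrimeSpectrum.asIdeal_lt_asIdeal]
    refine lt_of_le_of_ne
      (Ideal.comap_mono ((PrimeSpectrum.asIdeal_lt_asIdeal _ _).mpr hab).le) ?_
    intro heq
    have := Ideal.comap_injective_of_surjective _ (projK_surjective hLM hKL) heq
    exact (((PrimeSpectrum.asIdeal_lt_asIdeal _ _).mpr hab).ne) this
  have hMRg : ∀ q : PrimeSpectrum ↥K, MR K M ≤ q.asIdeal.comap (projK hLM hKL) := by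
    intro q x hx
    rw [Ideal.mem_comap, (show projK hLM hKL x = 0 from
      (projK_eq_zero_iff hLM hKL x).mpr ((mem_MR).mp hx))]
    exact q.asIdeal.zero_mem
  ------------------------------------------------------------------
  -- LOWER BOUND
  ------------------------------------------------------------------
  have hlow_t : t' ≤ ringKrullDim ↥(ringR K M) :=
    Order.krullDim_le_of_strictMono (specContr K M) (specContr_strictMono hM)
  have hlow_hk : h' + k' ≤ ringKrullDim ↥(ringR K M) := by
    obtain ⟨σ, hσ⟩ := le_krullDim_exists_ltSeries
      (α := {p : Ideal T // p.IsPrime ∧ p ≤ M}) (n := h) (by rw [← hEdim]; exact hh.ge)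
    obtain ⟨τ, hτ⟩ := le_krullDim_exists_ltSeries (α := PrimeSpectrum ↥K) (n := k) hk.ge
    have hf : StrictMono (fun e : {p : Ideal T // p.IsPrime ∧ p ≤ M} =>
        specContr K M ⟨e.1, e.2.1⟩) := (specContr_strictMono hM).comp hEincl
    let σ' := σ.map _ hf
    let τ' := τ.map _ hg
    have hσ' : σ'.length = h := by simpa [σ'] using hσ
    have hτ' : τ'.length = k := by simpa [τ'] using hτ
    have hconn : σ'.last ≤ τ'.head := by
      rw [show σ'.last = specContr K M ⟨σ.last.1, σ.last.2.1⟩ from LTSeries.last_map _ _ _,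
        show τ'.head = _ from LTSeries.head_map _ _ _]
      rw [← PrimeSpectrum.asIdeal_le_asIdeal]
      refine le_trans ?_ (hMRg τ.head)
      intro x hx
      exact σ.last.2.2 hx
    have hchain : ∃ ρ : LTSeries (PrimeSpectrum ↥(ringR K M)), h + k ≤ ρ.length := by
      rcases Nat.eq_zero_or_pos h with h0 | hpos
      · exact ⟨τ', by omega⟩
      · have hlen : σ'.length ≠ 0 := by omega
        refine ⟨σ'.eraseLast.append τ'
          (lt_of_lt_of_le (σ'.eraseLast_last_rel_last hlen) hconn), ?_⟩
        rw [RelSeries.append_length]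
        have h1 : σ'.eraseLast.length = σ'.length - 1 := rfl
        omega
    obtain ⟨ρ, hρ⟩ := hchain
    calc h' + k' = ((h : ℕ∞) : WithBot ℕ∞) + ((k : ℕ∞) : WithBot ℕ∞) := by rw [hh, hk]
    _ = (((h + k : ℕ) : ℕ∞) : WithBot ℕ∞) := by push_cast; ring
    _ ≤ (ρ.length : WithBot ℕ∞) := by exact_mod_cast natCast_le_natCast_wbot hρ
    _ ≤ _ := Order.LTSeries.length_le_krullDim ρ
  ------------------------------------------------------------------
  -- UPPER BOUND
  ------------------------------------------------------------------
  have hup : ringKrullDim ↥(ringR K M) ≤ max (h' + k') t' := by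
    refine iSup_le fun C => ?_
    set n := C.length with hndef
    by_cases hex : ∃ i : ℕ, ∃ hi : i < n + 1, MR K M ≤ (C ⟨i, hi⟩).asIdeal
    · -- the chain meets V(M)
      set j := Nat.find hex with hjdef
      obtain ⟨hjn, hjle⟩ := Nat.find_spec hex
      have hjmin : ∀ i (hi : i < n + 1), i < j → ¬ MR K M ≤ (C ⟨i, hi⟩).asIdeal := by
        intro i hi hij hle
        exact Nat.find_min hex hij ⟨hi, hle⟩
      have hjn' : j ≤ n := by omega
      -- upper part: a chain in Spec K of length n - j
      have hMle : ∀ i : Fin (n - j + 1), MR K M ≤ (C ⟨j + i, by omega⟩).asIdeal := by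
        intro i
        refine le_trans hjle ((PrimeSpectrum.asIdeal_le_asIdeal _ _).mpr (C.monotone ?_))
        exact Fin.mk_le_mk.mpr (by omega)
      have hupperK : (((n - j : ℕ) : ℕ∞) : WithBot ℕ∞) ≤ k' := by
        let τ : LTSeries (PrimeSpectrum ↥K) := LTSeries.mk (n - j)
          (fun i => ⟨Ideal.map (projK hLM hKL) (C ⟨j + i, by omega⟩).asIdeal,
            mapProj_prime hLM hKL (C ⟨j + i, by omega⟩).2 (hMle i)⟩)
          (by
            intro a b hab
            rw [← PrimeSpectrum.asIdeal_lt_asIdeal]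
            have hC : (C ⟨j + a, by omega⟩).asIdeal < (C ⟨j + b, by omega⟩).asIdeal := by
              rw [PrimeSpectrum.asIdeal_lt_asIdeal]
              exact C.strictMono (Fin.mk_lt_mk.mpr (by
                have := Fin.lt_iff_val_lt_val.mp hab
                omega))
            refine lt_of_le_of_ne (Ideal.map_mono hC.le) ?_
            intro heq
            have h1 := congrArg (Ideal.comap (projK hLM hKL)) heq
            rw [mapProj_comap_map hLM hKL (hMle a), mapProj_comap_map hLM hKL (hMle b)] at h1
            exact hC.ne h1)
        have h2 := Order.LTSeries.length_le_krullDim τ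
        have h3 : τ.length = n - j := rfl
        rw [h3] at h2
        exact h2
      -- lower part: a chain in E of length j
      have hlowerE : (((j : ℕ) : ℕ∞) : WithBot ℕ∞) ≤ h' := by
        have hsub : ∀ i (hi : i < n + 1), i < j → (C ⟨i, hi⟩).asIdeal ≤ MR K M := by
          intro i hi hij
          refine le_MR_of_le hL hLM hKL (C ⟨i, hi⟩).2 (C ⟨j, by omega⟩).2.ne_top
            ?_ hjle (hjmin i hi hij)
          exact (PrimeSpectrum.asIdeal_le_asIdeal _ _).mpr (C.monotone
            (Fin.mk_le_mk.mpr (by omega)))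
        have hchoice : ∀ i (hi : i < n + 1), i < j →
            ∃ Q : Ideal T, Q.IsPrime ∧ Q ≤ M ∧ (Q : Set T) = valSet (C ⟨i, hi⟩).asIdeal :=
          fun i hi hij => exists_primeT hL hMp hLM hKL hfrac (C ⟨i, hi⟩).2 (hsub i hi hij)
        choose Qf hQ1 hQ2 hQ3 using hchoice
        let σE : LTSeries {p : Ideal T // p.IsPrime ∧ p ≤ M} := LTSeries.mk j
          (fun i => if hij : (i : ℕ) < j then
              ⟨Qf i (by omega) hij, hQ1 _ _ _, hQ2 _ _ _⟩
            else ⟨M, hMp, le_rfl⟩)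
          (by
            intro a b hab
            have hab' : (a : ℕ) < b := Fin.lt_iff_val_lt_val.mp hab
            have hbj : (b : ℕ) ≤ j := by omega
            have haj : (a : ℕ) < j := by omega
            by_cases hbj' : (b : ℕ) < j
            · simp only [dif_pos haj, dif_pos hbj']
              rw [Subtype.mk_lt_mk]
              have hCC : (C ⟨a, by omega⟩).asIdeal < (C ⟨b, by omega⟩).asIdeal := by
                rw [PrimeSpectrum.asIdeal_lt_asIdeal]
                exact C.strictMono (Fin.mk_lt_mk.mpr hab')
              refine lt_of_le_of_ne ?_ ?_
              · intro x hx
                have h4 : x ∈ valSet (C ⟨(a : ℕ), by omega⟩).asIdeal := by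
                  rw [← hQ3 a (by omega) haj]; exact hx
                have h5 := valSet_mono hCC.le h4
                rw [← hQ3 b (by omega) hbj'] at h5
                exact h5
              · intro heq
                have h6 : valSet (C ⟨(a : ℕ), by omega⟩).asIdeal
                    = valSet (C ⟨(b : ℕ), by omega⟩).asIdeal := by
                  rw [← hQ3 a (by omega) haj, ← hQ3 b (by omega) hbj', heq]
                exact hCC.ne (valSet_injective h6)
            · simp only [dif_pos haj, dif_neg hbj']
              rw [Subtype.mk_lt_mk]
              refine lt_of_le_of_ne (hQ2 _ _ _) ?_
              intro heq
              refine hjmin a (by omega) haj ?_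
              intro x hx
              have hxM : (x : T) ∈ valSet (C ⟨(a : ℕ), by omega⟩).asIdeal := by
                rw [← hQ3 a (by omega) haj, heq]
                exact (mem_MR).mp hx
              obtain ⟨hR, hmem⟩ := hxM
              have h7 : (⟨(x : T), hR⟩ : ↥(ringR K M)) = x := Subtype.ext rfl
              rwa [h7] at hmem)
        have h2 := Order.LTSeries.length_le_krullDim σE
        have h3 : σE.length = j := rfl
        rw [h3, ← hEdim] at h2
        exact h2
      -- combine
      refine le_trans ?_ (le_max_left _ _)
      calc ((n : ℕ) : WithBot ℕ∞) = (((j + (n - j) : ℕ) : ℕ∞) : WithBot ℕ∞) := by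
            congr 1; push_cast [show j + (n - j) = n by omega]; rfl
      _ = (((j : ℕ) : ℕ∞) : WithBot ℕ∞) + (((n - j : ℕ) : ℕ∞) : WithBot ℕ∞) := by
            push_cast; ring
      _ ≤ h' + k' := add_le_add hlowerE hupperK
    · -- the chain avoids V(M): push it into Spec T
      push_neg at hex
      have hex' : ∀ i : Fin (n + 1), ¬ MR K M ≤ (C i).asIdeal := by
        intro i
        have h8 := hex i.1 i.2
        rwa [Fin.eta] at h8
      let D : LTSeries (PrimeSpectrum T) := LTSeries.mk n
        (fun i => ⟨QT K M (C i).asIdeal, QT_prime hMp (C i).2 (hex' i)⟩)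
        (by
          intro a b hab
          rw [← PrimeSpectrum.asIdeal_lt_asIdeal]
          have hCC : (C a).asIdeal < (C b).asIdeal := by
            rw [PrimeSpectrum.asIdeal_lt_asIdeal]
            exact C.strictMono hab
          refine lt_of_le_of_ne (QT_mono hCC.le) ?_
          intro heq
          have h1 := congrArg (Ideal.comap (ringR K M).subtype) heq
          rw [comap_QT (C a).2 (hex' a), comap_QT (C b).2 (hex' b)] at h1
          exact hCC.ne h1)
      have h2 := Order.LTSeries.length_le_krullDim D
      have h3 : D.length = n := rfl
      rw [h3] at h2
      exact le_trans h2 (le_max_right _ _)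
  ------------------------------------------------------------------
  -- conclusion
  ------------------------------------------------------------------
  have heq : ringKrullDim ↥(ringR K M) = max (h' + k') t' :=
    le_antisymm hup (max_le hlow_hk hlow_t)
  refine ⟨?_, heq⟩
  rw [heq]
  intro htop
  rcases max_eq_iff.mp htop with ⟨hc, _⟩ | ⟨hc, _⟩
  · rw [hh, hk, show ((h : ℕ∞) : WithBot ℕ∞) + ((k : ℕ∞) : WithBot ℕ∞)
        = (((h + k : ℕ) : ℕ∞) : WithBot ℕ∞) by push_cast; ring] at hc
    rw [show (⊤ : WithBot ℕ∞) = ((⊤ : ℕ∞) : WithBot ℕ∞) from rfl, WithBot.coe_inj] at hc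
    exact ENat.coe_ne_top _ hc
  · exact hTfin hc
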